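/- The series Σ_{n=1}^{∞} C(2n, n) / ((2n−1) · 4^n) converges and its sum equals 1, i.e. Σ'_{n≥1} (Nat.choose (2n) n : ℝ) / ((2n−1) · 4^n) = 1. -/

import Mathlib

open Filter Finset

private noncomputable def cbf (n : ℕ) : ℝ := ((2 * n).choose n : ℝ) / 4 ^ n

private lemma cbf_nonneg (n : ℕ) : 0 ≤ cbf n := by
  unfold cbf; positivity

private lemma cbf_succ (n : ℕ) :
    cbf (n + 1) = cbf n * (2 * n + 1) / (2 * n + 2) := by
  have h := Nat.succ_mul_centralBinom_succ n
  unfold Nat.centralBinom at h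
  have h' : ((n + 1 : ℕ) : ℝ) * ((2 * (n + 1)).choose (n + 1) : ℝ)
      = 2 * (2 * n + 1) * ((2 * n).choose n : ℝ) := by
    exact_mod_cast congrArg (Nat.cast : ℕ → ℝ) h
  unfold cbf
  have hn1 : ((n : ℝ) + 1) ≠ 0 := by positivity
  have h4 : (4 : ℝ) ^ n ≠ 0 := by positivity
  push_cast at h'
  rw [pow_succ]
  field_simp
  linear_combination 2 * h'

private lemma cbf_sq_le (n : ℕ) : cbf n ^ 2 * (2 * n + 1) ≤ 1 := by
  induction n with
  | zero => simp [cbf]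
  | succ n ih =>
      rw [cbf_succ]
      have hd : (0:ℝ) < 2 * n + 2 := by positivity
      have key : (2 * (n:ℝ) + 1) * (2 * n + 3) ≤ (2 * n + 2) ^ 2 := by nlinarith
      have hnn := cbf_nonneg n
      have : (cbf n * (2 * n + 1) / (2 * n + 2)) ^ 2 * (2 * ↑(n+1) + 1)
          ≤ cbf n ^ 2 * (2 * n + 1) := by
        rw [div_pow, div_mul_eq_mul_div, div_le_iff₀ (by positivity)]
        push_cast
        nlinarith [sq_nonneg (cbf n), mul_nonneg (sq_nonneg (cbf n)) (le_of_lt hd)]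
      linarith

private lemma cbf_tendsto : Tendsto cbf atTop (nhds 0) := by
  have hb : ∀ n : ℕ, cbf n ≤ Real.sqrt (1 / (n + 1)) := by
    intro n
    have h1 : cbf n ^ 2 ≤ 1 / (n + 1) := by
      have := cbf_sq_le n
      rw [le_div_iff₀ (by positivity)]
      nlinarith [sq_nonneg (cbf n)]
    calc cbf n = Real.sqrt (cbf n ^ 2) := by
            rw [Real.sqrt_sq (cbf_nonneg n)]
      _ ≤ Real.sqrt (1 / (n + 1)) := Real.sqrt_le_sqrt h1
  have hlim : Tendsto (fun n : ℕ => Real.sqrt (1 / (n + 1))) atTop (nhds 0) := by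
    have : Tendsto (fun n : ℕ => 1 / ((n : ℝ) + 1)) atTop (nhds 0) :=
      tendsto_one_div_add_atTop_nhds_zero_nat
    have h := (Real.continuous_sqrt.tendsto 0).comp this
    simpa [Function.comp_def, Real.sqrt_inv, one_div] using h
  exact squeeze_zero cbf_nonneg hb hlim

theorem central_binomial_series_eq_one :
    HasSum
      (fun n : ℕ =>
        (((2 * (n + 1)).choose (n + 1) : ℝ)) /
          ((2 * (n : ℝ) + 1) * 4 ^ (n + 1)))
      1 := by
  have hterm : ∀ n : ℕ,
      (((2 * (n + 1)).choose (n + 1) : ℝ)) / ((2 * (n : ℝ) + 1) * 4 ^ (n + 1))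
        = cbf n - cbf (n + 1) := by
    intro n
    have hn1 : ((n : ℝ) + 1) ≠ 0 := by positivity
    have h' : ((n:ℝ) + 1) * ((2 * (n + 1)).choose (n + 1) : ℝ)
        = 2 * (2 * (n:ℝ) + 1) * ((2 * n).choose n : ℝ) := by
      exact_mod_cast Nat.succ_mul_centralBinom_succ n
    have hC' : ((2 * (n + 1)).choose (n + 1) : ℝ)
        = 2 * (2 * (n:ℝ) + 1) * ((2 * n).choose n : ℝ) / ((n:ℝ) + 1) := by
      rw [eq_div_iff hn1]; linear_combination h'
    rw [cbf_succ, hC']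
    unfold cbf
    rw [pow_succ]
    have h21 : (2 * (n:ℝ) + 1) ≠ 0 := by positivity
    have h22 : (2 * (n:ℝ) + 2) ≠ 0 := by positivity
    have h4 : (4:ℝ) ^ n ≠ 0 := by positivity
    field_simp
    ring
  have hnn : ∀ n : ℕ, (0:ℝ) ≤
      (((2 * (n + 1)).choose (n + 1) : ℝ)) / ((2 * (n : ℝ) + 1) * 4 ^ (n + 1)) := by
    intro n; positivity
  rw [hasSum_iff_tendsto_nat_of_nonneg hnn]
  have : ∀ N : ℕ, ∑ i ∈ range N,
      (((2 * (i + 1)).choose (i + 1) : ℝ)) / ((2 * (i : ℝ) + 1) * 4 ^ (i + 1))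
      = 1 - cbf N := by
    intro N
    rw [Finset.sum_congr rfl fun i _ => hterm i, Finset.sum_range_sub']
    simp [cbf]
  simp only [this]
  simpa using tendsto_const_nhds.sub cbf_tendsto
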